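/- Let N ≥ 1, H = ℂ^N with orthonormal basis (ζ_j)_{j=0}^{N−1}, indices modulo N. Define ψ_{nm} := N^{−1/2} Σ_{j=0}^{N−1} e^{2πi j n / N} ζ_j ⊗ ζ_{j+m} ∈ H ⊗ H, let P_{nm} be the orthogonal projection onto ℂ·ψ_{nm}, and define the operator U_{nm} on H by U_{nm}(η) = Σ_{j=0}^{N−1} e^{2πi j n / N} ⟨ζ_{j+m}, η⟩ ζ_j. Then for every linear operator φ on H, Σ_{n,m=0}^{N−1} U_{nm} · Tr_{1,2}[(P_{nm} ⊗ I_H)(φ ⊗ P_{00})] · U_{nm}† = φ, where Tr_{1,2} denotes the partial trace over the first two tensor factors of H ⊗ H ⊗ H and φ ⊗ P_{00} is an operator on H ⊗ (H ⊗ H). In particular, the quantum teleportation protocol — Alice's Bell-basis measurement described by the quantum-classical channel σ ↦ Σ_{nm} tr(P_{nm} σ) χ_{nm} followed by Bob's correction b ⊗ σ ↦ Σ_{nm} b(x_{nm}) U_{nm} σ U_{nm}† — maps every input state φ to itself. -/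

import Mathlib

open scoped Matrix

namespace Teleport

variable (N : ℕ) [NeZero N]

/-- The generalized Bell state `ψ_{nm}` as a vector in `ℂ^N ⊗ ℂ^N` (concretely indexed by
`Fin N × Fin N`), built from the orthonormal family `ζ`. -/
noncomputable def ψv (ζ : Fin N → Fin N → ℂ) (nn mm : Fin N) : Fin N × Fin N → ℂ :=
  fun p => (Real.sqrt N : ℂ)⁻¹ * ∑ j : Fin N,
    Complex.exp (2 * Real.pi * Complex.I * ((j : ℕ) : ℂ) * ((nn : ℕ) : ℂ) / (N : ℂ)) *
      ζ j p.1 * ζ (j + mm) p.2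

/-- The orthogonal projection `P_{nm} = |ψ_{nm}⟩⟨ψ_{nm}|` as a matrix. -/
noncomputable def P (ζ : Fin N → Fin N → ℂ) (nn mm : Fin N) :
    Matrix (Fin N × Fin N) (Fin N × Fin N) ℂ :=
  Matrix.of fun p q => ψv N ζ nn mm p * (starRingEnd ℂ) (ψv N ζ nn mm q)

/-- Bob's correction unitary `U_{nm} = Σ_j e^{2πijn/N} |ζ_j⟩⟨ζ_{j+m}|`. -/
noncomputable def U (ζ : Fin N → Fin N → ℂ) (nn mm : Fin N) : Matrix (Fin N) (Fin N) ℂ :=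
  Matrix.of fun a b => ∑ j : Fin N,
    Complex.exp (2 * Real.pi * Complex.I * ((j : ℕ) : ℂ) * ((nn : ℕ) : ℂ) / (N : ℂ)) *
      ζ j a * (starRingEnd ℂ) (ζ (j + mm) b)

/-- The operator `P_{nm} ⊗ I` on `H ⊗ H ⊗ H` (factors (1,2) and 3). -/
noncomputable def bigA (ζ : Fin N → Fin N → ℂ) (nn mm : Fin N) :
    Matrix (Fin N × Fin N × Fin N) (Fin N × Fin N × Fin N) ℂ :=
  Matrix.of fun p q =>
    P N ζ nn mm (p.1, p.2.1) (q.1, q.2.1) * (if p.2.2 = q.2.2 then 1 else 0)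

/-- The operator `φ ⊗ P_{00}` on `H ⊗ H ⊗ H` (factor 1 and factors (2,3)). -/
noncomputable def bigB (ζ : Fin N → Fin N → ℂ) (φ : Matrix (Fin N) (Fin N) ℂ) :
    Matrix (Fin N × Fin N × Fin N) (Fin N × Fin N × Fin N) ℂ :=
  Matrix.of fun p q => φ p.1 q.1 * P N ζ 0 0 (p.2.1, p.2.2) (q.2.1, q.2.2)

/-- The operator `I ⊗ I ⊗ B` on `H ⊗ H ⊗ H`. -/
noncomputable def bigI (B : Matrix (Fin N) (Fin N) ℂ) :
    Matrix (Fin N × Fin N × Fin N) (Fin N × Fin N × Fin N) ℂ :=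
  Matrix.of fun p q =>
    (if p.1 = q.1 then 1 else 0) * (if p.2.1 = q.2.1 then 1 else 0) * B p.2.2 q.2.2

set_option linter.unusedSectionVars false
set_option maxHeartbeats 1600000

/-! ### auxiliary lemmas -/

lemma conj_E (nn j : Fin N) :
    (starRingEnd ℂ) (Complex.exp (2 * Real.pi * Complex.I * ((j : ℕ) : ℂ) * ((nn : ℕ) : ℂ) / (N : ℂ)))
    = Complex.exp (-(2 * Real.pi * Complex.I * ((j : ℕ) : ℂ) * ((nn : ℕ) : ℂ) / (N : ℂ))) := by
  rw [← Complex.exp_conj]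
  congr 1
  simp only [map_div₀, map_mul, Complex.conj_I, Complex.conj_ofReal, map_natCast, map_ofNat]
  ring

lemma E_mul_conjE (nn j : Fin N) :
    Complex.exp (2 * Real.pi * Complex.I * ((j : ℕ) : ℂ) * ((nn : ℕ) : ℂ) / (N : ℂ)) *
    (starRingEnd ℂ) (Complex.exp (2 * Real.pi * Complex.I * ((j : ℕ) : ℂ) * ((nn : ℕ) : ℂ) / (N : ℂ))) = 1 := by
  rw [conj_E, ← Complex.exp_add, add_neg_cancel, Complex.exp_zero]

lemma complete (ζ : Fin N → Fin N → ℂ)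
    (hζ : ∀ j k : Fin N, (∑ a : Fin N, (starRingEnd ℂ) (ζ j a) * ζ k a) = if j = k then 1 else 0)
    (a b : Fin N) : (∑ j : Fin N, ζ j a * (starRingEnd ℂ) (ζ j b)) = if a = b then 1 else 0 := by
  classical
  set Z : Matrix (Fin N) (Fin N) ℂ := Matrix.of fun a j => ζ j a with hZ
  have h1 : Zᴴ * Z = 1 := by
    ext j k
    simp [Matrix.mul_apply, Matrix.conjTranspose_apply, hZ, hζ j k, Matrix.one_apply]
  have h2 : Z * Zᴴ = 1 := mul_eq_one_comm.mp h1
  have := congrFun (congrFun (congrArg (fun M => (M : Matrix (Fin N) (Fin N) ℂ)) h2) a) b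
  simpa [Matrix.mul_apply, Matrix.conjTranspose_apply, hZ, Matrix.one_apply] using this

lemma U_mul_Uh (ζ : Fin N → Fin N → ℂ)
    (hζ : ∀ j k : Fin N, (∑ a : Fin N, (starRingEnd ℂ) (ζ j a) * ζ k a) = if j = k then 1 else 0)
    (nn mm : Fin N) : U N ζ nn mm * (U N ζ nn mm)ᴴ = 1 := by
  classical
  ext a b
  simp only [Matrix.mul_apply, Matrix.conjTranspose_apply, U, Matrix.of_apply, star_sum,
    Finset.sum_mul_sum]
  rw [Finset.sum_comm]
  refine Eq.trans (Finset.sum_congr rfl fun j _ => Finset.sum_comm) ?_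
  have key : ∀ j k : Fin N,
      (∑ d : Fin N, (Complex.exp (2 * Real.pi * Complex.I * ((j : ℕ) : ℂ) * ((nn : ℕ) : ℂ) / (N : ℂ)) *
        ζ j a * (starRingEnd ℂ) (ζ (j + mm) d)) *
        star (Complex.exp (2 * Real.pi * Complex.I * ((k : ℕ) : ℂ) * ((nn : ℕ) : ℂ) / (N : ℂ)) *
        ζ k b * (starRingEnd ℂ) (ζ (k + mm) d)))
      = (Complex.exp (2 * Real.pi * Complex.I * ((j : ℕ) : ℂ) * ((nn : ℕ) : ℂ) / (N : ℂ)) *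
         (starRingEnd ℂ) (Complex.exp (2 * Real.pi * Complex.I * ((k : ℕ) : ℂ) * ((nn : ℕ) : ℂ) / (N : ℂ))) *
         (ζ j a * (starRingEnd ℂ) (ζ k b))) * (if j + mm = k + mm then 1 else 0) := by
    intro j k
    rw [← hζ (j + mm) (k + mm), Finset.mul_sum]
    apply Finset.sum_congr rfl
    intro d _
    simp only [star_mul', RingHom.coe_coe]
    show _ = _
    simp only [Complex.star_def, map_mul, Complex.conj_conj]
    ring
  simp only [key, add_left_inj, mul_ite, mul_one, mul_zero, Finset.sum_ite_eq, Finset.mem_univ,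
    if_true]
  simp only [E_mul_conjE, one_mul]
  rw [complete N ζ hζ a b]
  simp [Matrix.one_apply]

lemma E_zero (j : Fin N) :
    Complex.exp (2 * Real.pi * Complex.I * ((j : ℕ) : ℂ) * (((0 : Fin N) : ℕ) : ℂ) / (N : ℂ)) = 1 := by
  have h : (((0 : Fin N) : ℕ) : ℂ) = 0 := by simp
  rw [h, mul_zero, zero_div, Complex.exp_zero]

lemma psi00 (ζ : Fin N → Fin N → ℂ) (p : Fin N × Fin N) :
    ψv N ζ 0 0 p = (Real.sqrt N : ℂ)⁻¹ * ∑ s : Fin N, ζ s p.1 * ζ s p.2 := by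
  unfold ψv
  congr 1
  refine Finset.sum_congr rfl fun s _ => ?_
  rw [E_zero, one_mul, add_zero]

lemma star_c : (starRingEnd ℂ) ((Real.sqrt N : ℂ)⁻¹) = (Real.sqrt N : ℂ)⁻¹ := by
  rw [map_inv₀, Complex.conj_ofReal]

/-- generic delta-contraction lemma -/
lemma collapse (F G : Fin N → ℂ) (W V : Fin N → Fin N → ℂ)
    (h : ∀ t s : Fin N, (∑ a : Fin N, W t a * V s a) = if t = s then 1 else 0)
    (σ : Fin N → Fin N) :
    (∑ a : Fin N, (∑ k : Fin N, F k * W (σ k) a) * (∑ s : Fin N, V s a * G s))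
      = ∑ k : Fin N, F k * G (σ k) := by
  classical
  simp only [Finset.sum_mul_sum]
  rw [Finset.sum_comm]
  refine Eq.trans (Finset.sum_congr rfl fun k _ => Finset.sum_comm) ?_
  refine Finset.sum_congr rfl fun k _ => ?_
  calc (∑ s : Fin N, ∑ a : Fin N, (F k * W (σ k) a) * (V s a * G s))
      = ∑ s : Fin N, (F k * G s) * ∑ a : Fin N, W (σ k) a * V s a := by
        refine Finset.sum_congr rfl fun s _ => ?_
        rw [Finset.mul_sum]
        exact Finset.sum_congr rfl fun a _ => by ring
    _ = ∑ s : Fin N, (F k * G s) * (if σ k = s then 1 else 0) := by simp only [h]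
    _ = F k * G (σ k) := by
        simp only [mul_ite, mul_one, mul_zero, Finset.sum_ite_eq, Finset.mem_univ, if_true]

lemma c1 (ζ : Fin N → Fin N → ℂ)
    (hζ : ∀ j k : Fin N, (∑ a : Fin N, (starRingEnd ℂ) (ζ j a) * ζ k a) = if j = k then 1 else 0)
    (nn mm q1 p22 : Fin N) :
    (∑ q21 : Fin N, (starRingEnd ℂ) (ψv N ζ nn mm (q1, q21)) * ψv N ζ 0 0 (q21, p22))
    = (Real.sqrt N : ℂ)⁻¹ * (Real.sqrt N : ℂ)⁻¹ *
      ∑ k : Fin N, (starRingEnd ℂ)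
          (Complex.exp (2 * Real.pi * Complex.I * ((k : ℕ) : ℂ) * ((nn : ℕ) : ℂ) / (N : ℂ))) *
        (starRingEnd ℂ) (ζ k q1) * ζ (k + mm) p22 := by
  classical
  have hcol : (∑ a : Fin N,
      (∑ k : Fin N, ((starRingEnd ℂ)
          (Complex.exp (2 * Real.pi * Complex.I * ((k : ℕ) : ℂ) * ((nn : ℕ) : ℂ) / (N : ℂ))) *
        (starRingEnd ℂ) (ζ k q1)) * (starRingEnd ℂ) (ζ (k + mm) a)) *
      (∑ s : Fin N, ζ s a * ζ s p22))
      = ∑ k : Fin N, ((starRingEnd ℂ)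
          (Complex.exp (2 * Real.pi * Complex.I * ((k : ℕ) : ℂ) * ((nn : ℕ) : ℂ) / (N : ℂ))) *
        (starRingEnd ℂ) (ζ k q1)) * ζ (k + mm) p22 :=
    collapse N _ (fun s => ζ s p22) (fun t a => (starRingEnd ℂ) (ζ t a)) (fun s a => ζ s a)
      hζ (fun k => k + mm)
  simp only [psi00]
  simp only [ψv, map_mul, map_sum, star_c]
  trans ((Real.sqrt N : ℂ)⁻¹ * (Real.sqrt N : ℂ)⁻¹) * (∑ a : Fin N,
      (∑ k : Fin N, ((starRingEnd ℂ)
          (Complex.exp (2 * Real.pi * Complex.I * ((k : ℕ) : ℂ) * ((nn : ℕ) : ℂ) / (N : ℂ))) *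
        (starRingEnd ℂ) (ζ k q1)) * (starRingEnd ℂ) (ζ (k + mm) a)) *
      (∑ s : Fin N, ζ s a * ζ s p22))
  · conv_rhs => rw [Finset.mul_sum]
    exact Finset.sum_congr rfl fun a _ => by ring
  · rw [hcol]

lemma c2pre (ζ : Fin N → Fin N → ℂ) (B : Matrix (Fin N) (Fin N) ℂ) (p21 p22 : Fin N) :
    (∑ r22 : Fin N, (starRingEnd ℂ) (ψv N ζ 0 0 (p21, r22)) * B r22 p22)
    = (Real.sqrt N : ℂ)⁻¹ * ∑ t : Fin N, (starRingEnd ℂ) (ζ t p21) *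
        (∑ r22 : Fin N, (starRingEnd ℂ) (ζ t r22) * B r22 p22) := by
  simp only [psi00, map_mul, map_sum, star_c]
  trans (Real.sqrt N : ℂ)⁻¹ * (∑ r22 : Fin N, ∑ t : Fin N,
      ((starRingEnd ℂ) (ζ t p21) * (starRingEnd ℂ) (ζ t r22)) * B r22 p22)
  · conv_rhs => rw [Finset.mul_sum]
    refine Finset.sum_congr rfl fun r _ => ?_
    rw [mul_assoc, Finset.sum_mul]
  · congr 1
    rw [Finset.sum_comm]
    refine Finset.sum_congr rfl fun t _ => ?_
    rw [Finset.mul_sum]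
    exact Finset.sum_congr rfl fun r _ => by ring

lemma c3 (ζ : Fin N → Fin N → ℂ)
    (hζ : ∀ j k : Fin N, (∑ a : Fin N, (starRingEnd ℂ) (ζ j a) * ζ k a) = if j = k then 1 else 0)
    (nn mm p1 : Fin N) (g : Fin N → ℂ) :
    (∑ p21 : Fin N, ψv N ζ nn mm (p1, p21) * (∑ t : Fin N, (starRingEnd ℂ) (ζ t p21) * g t))
    = (Real.sqrt N : ℂ)⁻¹ * ∑ j : Fin N,
        Complex.exp (2 * Real.pi * Complex.I * ((j : ℕ) : ℂ) * ((nn : ℕ) : ℂ) / (N : ℂ)) *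
          ζ j p1 * g (j + mm) := by
  classical
  have horth : ∀ t s : Fin N, (∑ a : Fin N, ζ t a * (starRingEnd ℂ) (ζ s a)) = if t = s then 1 else 0 := by
    intro t s
    rw [show (∑ a : Fin N, ζ t a * (starRingEnd ℂ) (ζ s a))
        = ∑ a : Fin N, (starRingEnd ℂ) (ζ s a) * ζ t a from
      Finset.sum_congr rfl fun a _ => mul_comm _ _, hζ s t]
    exact if_congr eq_comm rfl rfl
  have hcol : (∑ a : Fin N,
      (∑ j : Fin N, (Complex.exp (2 * Real.pi * Complex.I * ((j : ℕ) : ℂ) * ((nn : ℕ) : ℂ) / (N : ℂ)) *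
        ζ j p1) * ζ (j + mm) a) *
      (∑ s : Fin N, (starRingEnd ℂ) (ζ s a) * g s))
      = ∑ j : Fin N, (Complex.exp (2 * Real.pi * Complex.I * ((j : ℕ) : ℂ) * ((nn : ℕ) : ℂ) / (N : ℂ)) *
        ζ j p1) * g (j + mm) :=
    collapse N _ g (fun t a => ζ t a) (fun s a => (starRingEnd ℂ) (ζ s a)) horth (fun j => j + mm)
  simp only [ψv]
  trans (Real.sqrt N : ℂ)⁻¹ * (∑ a : Fin N,
      (∑ j : Fin N, (Complex.exp (2 * Real.pi * Complex.I * ((j : ℕ) : ℂ) * ((nn : ℕ) : ℂ) / (N : ℂ)) *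
        ζ j p1) * ζ (j + mm) a) *
      (∑ s : Fin N, (starRingEnd ℂ) (ζ s a) * g s))
  · conv_rhs => rw [Finset.mul_sum]
    exact Finset.sum_congr rfl fun a _ => by ring
  · rw [hcol]

lemma step1 (ζ : Fin N → Fin N → ℂ) (φ B : Matrix (Fin N) (Fin N) ℂ) (nn mm : Fin N) :
    Matrix.trace ((bigA N ζ nn mm * bigB N ζ φ) * bigI N B) =
    ∑ p1 : Fin N, ∑ p21 : Fin N, ∑ p22 : Fin N, ∑ q1 : Fin N, ∑ q21 : Fin N, ∑ r22 : Fin N,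
      ψv N ζ nn mm (p1, p21) * (starRingEnd ℂ) (ψv N ζ nn mm (q1, q21)) * φ q1 p1 *
        (ψv N ζ 0 0 (q21, p22) * (starRingEnd ℂ) (ψv N ζ 0 0 (p21, r22))) * B r22 p22 := by
  classical
  simp only [Matrix.trace, Matrix.diag, Matrix.mul_apply, bigA, bigB, bigI, P, Matrix.of_apply,
    Fintype.sum_prod_type, mul_ite, ite_mul, mul_one, one_mul, mul_zero, zero_mul,
    Finset.sum_ite_eq, Finset.sum_ite_eq', Finset.mem_univ, if_true, Finset.sum_mul, Finset.mul_sum]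
  refine Finset.sum_congr rfl fun x _ => Finset.sum_congr rfl fun x1 _ => Finset.sum_congr rfl fun x2 _ => ?_
  rw [Finset.sum_comm]
  refine Eq.trans (Finset.sum_congr rfl fun x4 _ => Finset.sum_comm) ?_
  rw [Finset.sum_comm]
  simp only [Finset.sum_ite_irrel, Finset.sum_const_zero, Finset.sum_ite_eq', Finset.mem_univ, if_true]
  rw [Finset.sum_comm]
  refine Finset.sum_congr rfl fun q1 _ => ?_
  rw [Finset.sum_comm]
  refine Finset.sum_congr rfl fun q21 _ => Finset.sum_congr rfl fun r22 _ => ?_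
  ring

lemma htr (ζ : Fin N → Fin N → ℂ) (φ B : Matrix (Fin N) (Fin N) ℂ) (nn mm : Fin N) :
    Matrix.trace (((U N ζ nn mm)ᴴ * φ * U N ζ nn mm) * B) =
    ∑ x : Fin N, ∑ x1 : Fin N, ∑ x2 : Fin N, ∑ x3 : Fin N, ∑ x4 : Fin N, ∑ i : Fin N,
      (starRingEnd ℂ) (Complex.exp (2 * Real.pi * Complex.I * ((i : ℕ) : ℂ) * ((nn : ℕ) : ℂ) / (N : ℂ))) *
        (starRingEnd ℂ) (ζ i x4) * ζ (i + mm) x * φ x4 x2 *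
        (Complex.exp (2 * Real.pi * Complex.I * ((x3 : ℕ) : ℂ) * ((nn : ℕ) : ℂ) / (N : ℂ)) *
          ζ x3 x2 * (starRingEnd ℂ) (ζ (x3 + mm) x1)) * B x1 x := by
  simp only [Matrix.trace, Matrix.diag, Matrix.mul_apply, Matrix.conjTranspose_apply, U,
    Matrix.of_apply, star_sum, star_mul', Complex.star_def, map_mul, Complex.conj_conj,
    Finset.sum_mul, Finset.mul_sum]

lemma perm6 {M : Type*} [AddCommMonoid M] (f : Fin N → Fin N → Fin N → Fin N → Fin N → Fin N → M) :
    (∑ p22 : Fin N, ∑ r22 : Fin N, ∑ p1 : Fin N, ∑ j : Fin N, ∑ q1 : Fin N, ∑ k : Fin N,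
      f p1 p22 q1 k j r22)
    = ∑ p1 : Fin N, ∑ p22 : Fin N, ∑ q1 : Fin N, ∑ j : Fin N, ∑ r22 : Fin N, ∑ k : Fin N,
      f p1 p22 q1 k j r22 := by
  -- [p22,r22,p1,j,q1,k]
  conv_lhs => enter [2, p22]; rw [Finset.sum_comm]
  -- [p22,p1,r22,j,q1,k]
  rw [Finset.sum_comm]
  -- [p1,p22,r22,j,q1,k]
  conv_lhs => enter [2, p1, 2, p22, 2, r22]; rw [Finset.sum_comm]
  -- [p1,p22,r22,q1,j,k]
  conv_lhs => enter [2, p1, 2, p22]; rw [Finset.sum_comm]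
  -- [p1,p22,q1,r22,j,k]
  conv_lhs => enter [2, p1, 2, p22, 2, q1]; rw [Finset.sum_comm]
  -- [p1,p22,q1,j,r22,k]

lemma hNN : (Real.sqrt N : ℂ)⁻¹ * (Real.sqrt N : ℂ)⁻¹ = ((N : ℂ))⁻¹ := by
  rw [← mul_inv, ← Complex.ofReal_mul, Real.mul_self_sqrt (Nat.cast_nonneg N),
    Complex.ofReal_natCast]

lemma traceKey (ζ : Fin N → Fin N → ℂ)
    (hζ : ∀ j k : Fin N, (∑ a : Fin N, (starRingEnd ℂ) (ζ j a) * ζ k a) = if j = k then 1 else 0)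
    (φ B : Matrix (Fin N) (Fin N) ℂ) (nn mm : Fin N) :
    Matrix.trace ((bigA N ζ nn mm * bigB N ζ φ) * bigI N B)
    = ((N : ℂ)^2)⁻¹ * Matrix.trace (((U N ζ nn mm)ᴴ * φ * U N ζ nn mm) * B) := by
  classical
  rw [step1, htr]
  rw [show ((N : ℂ)^2)⁻¹ = ((Real.sqrt N : ℂ)⁻¹ * (Real.sqrt N : ℂ)⁻¹) *
      ((Real.sqrt N : ℂ)⁻¹ * (Real.sqrt N : ℂ)⁻¹) from by rw [hNN, sq, mul_inv]]
  conv_rhs => rw [perm6]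
  have hS2 : ∀ p1 p21 p22 q1 : Fin N,
      (∑ q21 : Fin N, ∑ r22 : Fin N,
        ψv N ζ nn mm (p1, p21) * (starRingEnd ℂ) (ψv N ζ nn mm (q1, q21)) * φ q1 p1 *
          (ψv N ζ 0 0 (q21, p22) * (starRingEnd ℂ) (ψv N ζ 0 0 (p21, r22))) * B r22 p22)
      = ψv N ζ nn mm (p1, p21) * φ q1 p1 *
          ((∑ q21 : Fin N, (starRingEnd ℂ) (ψv N ζ nn mm (q1, q21)) * ψv N ζ 0 0 (q21, p22)) *
           (∑ r22 : Fin N, (starRingEnd ℂ) (ψv N ζ 0 0 (p21, r22)) * B r22 p22)) := by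
    intro p1 p21 p22 q1
    conv_rhs => rw [Finset.sum_mul_sum, Finset.mul_sum]
    refine Finset.sum_congr rfl fun q21 _ => ?_
    rw [Finset.mul_sum]
    exact Finset.sum_congr rfl fun r22 _ => by ring
  simp only [hS2]
  simp only [c1 N ζ hζ nn mm, c2pre N ζ B]
  conv_lhs => enter [2, x]; rw [Finset.sum_comm]
  conv_lhs => enter [2, x, 2, x2]; rw [Finset.sum_comm]
  have hS5 : ∀ p1 p22 q1 : Fin N,
      (∑ p21 : Fin N, ψv N ζ nn mm (p1, p21) * φ q1 p1 *
        (((Real.sqrt N : ℂ)⁻¹ * (Real.sqrt N : ℂ)⁻¹ *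
            ∑ k : Fin N, (starRingEnd ℂ)
                (Complex.exp (2 * Real.pi * Complex.I * ((k : ℕ) : ℂ) * ((nn : ℕ) : ℂ) / (N : ℂ))) *
              (starRingEnd ℂ) (ζ k q1) * ζ (k + mm) p22) *
          ((Real.sqrt N : ℂ)⁻¹ *
            ∑ t : Fin N, (starRingEnd ℂ) (ζ t p21) *
              ∑ r22 : Fin N, (starRingEnd ℂ) (ζ t r22) * B r22 p22)))
      = ((Real.sqrt N : ℂ)⁻¹ * (Real.sqrt N : ℂ)⁻¹ * (Real.sqrt N : ℂ)⁻¹ *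
          (φ q1 p1 * ∑ k : Fin N, (starRingEnd ℂ)
                (Complex.exp (2 * Real.pi * Complex.I * ((k : ℕ) : ℂ) * ((nn : ℕ) : ℂ) / (N : ℂ))) *
              (starRingEnd ℂ) (ζ k q1) * ζ (k + mm) p22)) *
        (∑ p21 : Fin N, ψv N ζ nn mm (p1, p21) *
          (∑ t : Fin N, (starRingEnd ℂ) (ζ t p21) *
            ∑ r22 : Fin N, (starRingEnd ℂ) (ζ t r22) * B r22 p22)) := by
    intro p1 p22 q1
    conv_rhs => rw [Finset.mul_sum]
    exact Finset.sum_congr rfl fun p21 _ => by ring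
  simp only [hS5]
  simp only [c3 N ζ hζ nn mm]
  simp only [Finset.mul_sum, Finset.sum_mul]
  refine Finset.sum_congr rfl fun p1 _ => Finset.sum_congr rfl fun p22 _ =>
    Finset.sum_congr rfl fun q1 _ => Finset.sum_congr rfl fun k _ =>
    Finset.sum_congr rfl fun j _ => Finset.sum_congr rfl fun r22 _ => by ring


lemma trace_mul_std (M : Matrix (Fin N) (Fin N) ℂ) (a b : Fin N) :
    Matrix.trace (M * Matrix.single b a 1) = M a b := by
  classical
  simp [Matrix.trace, Matrix.diag, Matrix.mul_apply, Matrix.single, ite_and,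
    mul_ite, mul_one, mul_zero, Finset.sum_ite_eq, Finset.sum_ite_eq']

/-- Validity of the `N`-dimensional quantum teleportation protocol:
if `T n m` is the partial trace over the first two factors of
`(P_{nm} ⊗ I)·(φ ⊗ P_{00})` — characterized by `tr(T·B) = tr(X·(I⊗I⊗B))` — then
`Σ_{n,m} U_{nm} · T n m · U_{nm}† = φ`. -/
theorem stmt18 (ζ : Fin N → Fin N → ℂ)
    (hζ : ∀ j k : Fin N,
      (∑ a : Fin N, (starRingEnd ℂ) (ζ j a) * ζ k a) = if j = k then 1 else 0)
    (φ : Matrix (Fin N) (Fin N) ℂ)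
    (T : Fin N → Fin N → Matrix (Fin N) (Fin N) ℂ)
    (hT : ∀ (nn mm : Fin N) (B : Matrix (Fin N) (Fin N) ℂ),
      Matrix.trace (T nn mm * B) =
        Matrix.trace ((bigA N ζ nn mm * bigB N ζ φ) * bigI N B)) :
    (∑ nn : Fin N, ∑ mm : Fin N, U N ζ nn mm * T nn mm * (U N ζ nn mm)ᴴ) = φ := by
  classical
  have hT' : ∀ nn mm : Fin N,
      T nn mm = ((N : ℂ)^2)⁻¹ • ((U N ζ nn mm)ᴴ * φ * U N ζ nn mm) := by
    intro nn mm
    ext a b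
    have h1 := hT nn mm (Matrix.single b a 1)
    rw [traceKey N ζ hζ φ (Matrix.single b a 1) nn mm, trace_mul_std,
      trace_mul_std] at h1
    rw [h1]
    simp [Matrix.smul_apply, smul_eq_mul]
  have hterm : ∀ nn mm : Fin N,
      U N ζ nn mm * T nn mm * (U N ζ nn mm)ᴴ = ((N : ℂ)^2)⁻¹ • φ := by
    intro nn mm
    rw [hT', Matrix.mul_smul, Matrix.smul_mul]
    congr 1
    simp only [← Matrix.mul_assoc]
    rw [U_mul_Uh N ζ hζ nn mm, Matrix.one_mul, Matrix.mul_assoc,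
      U_mul_Uh N ζ hζ nn mm, Matrix.mul_one]
  simp only [hterm]
  simp only [Finset.sum_const, Finset.card_univ, Fintype.card_fin]
  rw [← Nat.cast_smul_eq_nsmul ℂ, ← Nat.cast_smul_eq_nsmul ℂ, smul_smul, smul_smul]
  rw [show (N : ℂ) * (N : ℂ) * ((N : ℂ)^2)⁻¹ = 1 from by
    have hN : (N : ℂ) ≠ 0 := Nat.cast_ne_zero.mpr (NeZero.ne N)
    field_simp]
  rw [one_smul]
end Teleport
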